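/- Let X be a topological space. The space Fp(O(X)) together with the family of maps {ψ_f} indexed by continuous maps f : X → P(I) (I ranging over sets) is a limit cone for the diagram sending each pair (P(I), f) to P(I); that is: (1) for every continuous f : X → P(I) and every continuous φ : P(I) → P(J) one has φ ∘ ψ_f = ψ_{φ∘f}, and (2) for every topological space M equipped with continuous maps ψ'_f : M → P(I) (one for each set I and continuous f : X → P(I)) satisfying φ ∘ ψ'_f = ψ'_{φ∘f} for all continuous φ : P(I) → P(J), there exists a unique continuous map α : M → Fp(O(X)) such that ψ_f ∘ α = ψ'_f for every f. Consequently, the underlying functor of the codensity monad of the inclusion of the category of powers of the Sierpiński space into Top sends X to its soberification Fp(O(X)). -/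

import Mathlib

open TopologicalSpace Topology

/-- The topology on the powerset `Set I` generated by the basic sets
`U_F = {A | F ⊆ A}` for finite `F ⊆ I`.  This is the `I`-th power of the
Sierpiński space. -/
def pTop (I : Type*) : TopologicalSpace (Set I) :=
  generateFrom {S : Set (Set I) | ∃ F : Finset I, S = {A : Set I | ↑F ⊆ A}}

/-- The basic open set `U_F = {A | F ⊆ A}` is open in `pTop I`. -/
theorem isOpen_UF {I : Type*} (F : Finset I) :
    IsOpen[pTop I] {A : Set I | ↑F ⊆ A} :=
  TopologicalSpace.isOpen_generateFrom_of_mem ⟨F, rfl⟩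

/-- The subbasic open set `U_{i} = {A | i ∈ A}` is open in `pTop I`. -/
theorem isOpen_Ui {I : Type*} (i : I) :
    IsOpen[pTop I] {A : Set I | i ∈ A} := by
  have h : {A : Set I | i ∈ A} = {A : Set I | ↑({i} : Finset I) ⊆ A} := by
    ext A; simp
  rw [h]
  exact isOpen_UF {i}

/-- A completely prime filter of the frame `Opens X` of open sets of `X`. -/
def IsCompletelyPrimeFilter {X : Type*} [TopologicalSpace X] (p : Set (Opens X)) : Prop :=
  ⊤ ∈ p ∧ ⊥ ∉ p ∧ (∀ A ∈ p, ∀ B ∈ p, A ⊓ B ∈ p) ∧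
    (∀ A ∈ p, ∀ B, A ≤ B → B ∈ p) ∧
    ∀ S : Set (Opens X), sSup S ∈ p → ∃ A ∈ S, A ∈ p

/-- `Fp X` is the set of points (completely prime filters) of the frame of opens of `X`. -/
def Fp (X : Type*) [TopologicalSpace X] : Type _ :=
  {p : Set (Opens X) // IsCompletelyPrimeFilter p}

/-- The topology on `Fp X` whose open sets are generated by the sets
`A* = {𝔭 | A ∈ 𝔭}` for `A` open in `X`. -/
instance (X : Type*) [TopologicalSpace X] : TopologicalSpace (Fp X) :=
  generateFrom {S | ∃ A : Opens X, S = {p : Fp X | A ∈ p.1}}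

/-- `ψ_f : Fp(O(X)) → P(I)`, defined by `i ∈ ψ_f(𝔭) ↔ f⁻¹(U_{i}) ∈ 𝔭`. -/
def psiFp {X : Type*} [TopologicalSpace X] {I : Type*} {f : X → Set I}
    (hf : Continuous[‹TopologicalSpace X›, pTop I] f) (p : Fp X) : Set I :=
  {i : I | (⟨f ⁻¹' {A : Set I | i ∈ A}, @IsOpen.preimage X (Set I) _ (pTop I) f hf _ (isOpen_Ui i)⟩ : Opens X) ∈ p.1}

section Aux
variable {X : Type*} [tX : TopologicalSpace X]

theorem mem_iff_of_eq (p : Fp X) {U : Set X} (hU : IsOpen U) {A : Opens X} (h : U = ↑A) :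
    ((⟨U, hU⟩ : Opens X) ∈ p.1 ↔ A ∈ p.1) := by
  have : (⟨U, hU⟩ : Opens X) = A := Opens.ext h
  rw [this]

theorem finset_inf_mem {I : Type*} (p : Fp X) (F : Finset I) (g : I → Opens X) :
    F.inf g ∈ p.1 ↔ ∀ i ∈ F, g i ∈ p.1 := by
  classical
  induction F using Finset.induction with
  | empty => simpa using p.2.1
  | @insert a F ha ih =>
    rw [Finset.inf_insert]
    constructor
    · intro h i hi
      rcases Finset.mem_insert.mp hi with rfl | hi
      · exact p.2.2.2.2.1 _ h _ inf_le_left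
      · exact (ih.mp (p.2.2.2.2.1 _ h _ inf_le_right)) i hi
    · intro h
      exact p.2.2.2.1 _ (h a (Finset.mem_insert_self a F)) _
        (ih.mpr fun i hi => h i (Finset.mem_insert_of_mem hi))

theorem preimage_UF_eq {I : Type*} {f : X → Set I} (hf : Continuous[tX, pTop I] f)
    (F : Finset I) :
    f ⁻¹' {A : Set I | ↑F ⊆ A} = ↑(F.inf fun i => (⟨f ⁻¹' {A : Set I | i ∈ A},
      @IsOpen.preimage X (Set I) _ (pTop I) f hf _ (isOpen_Ui i)⟩ : Opens X)) := by
  classical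
  induction F using Finset.induction with
  | empty => simp
  | @insert a F ha ih =>
    rw [Finset.inf_insert]
    ext x
    simp only [Set.mem_preimage, Set.mem_setOf_eq, Finset.coe_insert,
      Set.insert_subset_iff, Opens.coe_inf, Set.mem_inter_iff]
    rw [show (x ∈ (↑(F.inf fun i => (⟨f ⁻¹' {A : Set I | i ∈ A},
      @IsOpen.preimage X (Set I) _ (pTop I) f hf _ (isOpen_Ui i)⟩ : Opens X)) : Set X))
      ↔ x ∈ f ⁻¹' {A : Set I | ↑F ⊆ A} from by rw [ih]]
    simp

/-- Key lemma. -/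
theorem key {I : Type*} {f : X → Set I} (hf : Continuous[tX, pTop I] f) (p : Fp X)
    {W : Set (Set I)} (hW : IsOpen[pTop I] W) :
    ∀ h : IsOpen (f ⁻¹' W), ((⟨f ⁻¹' W, h⟩ : Opens X) ∈ p.1 ↔ psiFp hf p ∈ W) := by
  classical
  induction hW with
  | basic s hs =>
    obtain ⟨F, rfl⟩ := hs
    intro h
    rw [mem_iff_of_eq p h (preimage_UF_eq hf F), finset_inf_mem]
    exact ⟨fun h i hi => h i (Finset.mem_coe.mp hi), fun h i hi => h (Finset.mem_coe.mpr hi)⟩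
  | univ =>
    intro h
    rw [mem_iff_of_eq p h (show f ⁻¹' Set.univ = ((⊤ : Opens X) : Set X) from by simp)]
    simp [p.2.1]
  | inter s t hs ht ihs iht =>
    intro h
    have hps : IsOpen (f ⁻¹' s) := @IsOpen.preimage X (Set I) _ (pTop I) f hf _ hs
    have hpt : IsOpen (f ⁻¹' t) := @IsOpen.preimage X (Set I) _ (pTop I) f hf _ ht
    rw [mem_iff_of_eq p h (show f ⁻¹' (s ∩ t) =
      ↑((⟨f ⁻¹' s, hps⟩ : Opens X) ⊓ ⟨f ⁻¹' t, hpt⟩) from by simp [Set.preimage_inter])]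
    constructor
    · intro h
      exact ⟨(ihs hps).mp (p.2.2.2.2.1 _ h _ inf_le_left),
             (iht hpt).mp (p.2.2.2.2.1 _ h _ inf_le_right)⟩
    · rintro ⟨h1, h2⟩
      exact p.2.2.2.1 _ ((ihs hps).mpr h1) _ ((iht hpt).mpr h2)
  | sUnion S hS ih =>
    intro h
    set T : Set (Opens X) := {A : Opens X | ∃ W ∈ S, (A : Set X) = f ⁻¹' W} with hT
    have hcar : f ⁻¹' ⋃₀ S = ↑(sSup T) := by
      rw [Opens.coe_sSup]
      ext x
      simp only [Set.mem_preimage, Set.mem_sUnion, Set.mem_iUnion, exists_prop]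
      constructor
      · rintro ⟨W, hWS, hx⟩
        exact ⟨⟨f ⁻¹' W, @IsOpen.preimage X (Set I) _ (pTop I) f hf _ (hS W hWS)⟩,
          ⟨W, hWS, rfl⟩, hx⟩
      · rintro ⟨A, ⟨W, hWS, hA⟩, hx⟩
        exact ⟨W, hWS, by rw [← Set.mem_preimage, ← hA]; exact hx⟩
    rw [mem_iff_of_eq p h hcar]
    constructor
    · intro hmem
      obtain ⟨A, ⟨W, hWS, hA⟩, hAp⟩ := p.2.2.2.2.2 T hmem
      refine ⟨W, hWS, ?_⟩
      have hWo : IsOpen (f ⁻¹' W) := @IsOpen.preimage X (Set I) _ (pTop I) f hf _ (hS W hWS)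
      rw [← ih W hWS hWo]
      have : A = (⟨f ⁻¹' W, hWo⟩ : Opens X) := Opens.ext hA
      rwa [this] at hAp
    · rintro ⟨W, hWS, hx⟩
      have hWo : IsOpen (f ⁻¹' W) := @IsOpen.preimage X (Set I) _ (pTop I) f hf _ (hS W hWS)
      have hmem : (⟨f ⁻¹' W, hWo⟩ : Opens X) ∈ p.1 := (ih W hWS hWo).mpr hx
      refine p.2.2.2.2.1 _ hmem (sSup T) ?_
      have hle : f ⁻¹' W ⊆ f ⁻¹' ⋃₀ S := Set.preimage_mono (Set.subset_sUnion_of_mem hWS)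
      rw [hcar] at hle
      exact hle

end Aux

section Part2
variable {X : Type*} [tX : TopologicalSpace X]

/-- The unit map `η : X → P(Opens X)`, `x ↦ {A | x ∈ A}`. -/
def etaMap (X : Type*) [TopologicalSpace X] : X → Set (Opens X) := fun x => {A | x ∈ A}

theorem etaMap_continuous : Continuous[tX, pTop (Opens X)] (etaMap X) := by
  rw [pTop, continuous_generateFrom_iff]
  rintro s ⟨F, rfl⟩
  have : etaMap X ⁻¹' {A : Set (Opens X) | ↑F ⊆ A} = ⋂ A ∈ F, (A : Set X) := by
    ext x
    simp [etaMap, Set.subset_def]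
  rw [this]
  exact isOpen_biInter_finset fun A _ => A.2

/-- For open `W` in `pTop Y`, the map `S ↦ {u | S ∈ W}` into the Sierpiński space is
continuous. -/
theorem phiW_continuous {Y : Type*} {W : Set (Set Y)} (hW : IsOpen[pTop Y] W) :
    Continuous[pTop Y, pTop Unit] fun S => {_u : Unit | S ∈ W} := by
  apply continuous_generateFrom_iff.mpr
  rintro s ⟨F, rfl⟩
  rcases Finset.eq_empty_or_nonempty F with rfl | hF
  · have : (fun S => {_u : Unit | S ∈ W}) ⁻¹' {A : Set Unit | ↑(∅ : Finset Unit) ⊆ A}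
        = Set.univ := by ext S; simp
    rw [this]; exact @isOpen_univ _ (pTop Y)
  · have : (fun S => {_u : Unit | S ∈ W}) ⁻¹' {A : Set Unit | ↑F ⊆ A} = W := by
      ext S
      simp only [Set.mem_preimage, Set.mem_setOf_eq, Set.subset_def, Finset.mem_coe]
      exact ⟨fun h => h hF.choose hF.choose_spec, fun h u _ => h⟩
    rw [this]; exact hW

end Part2

theorem part1 {X : Type} [tX : TopologicalSpace X] (I J : Type) (f : X → Set I)
    (hf : Continuous[tX, pTop I] f)
    (φ : Set I → Set J) (hφ : Continuous[pTop I, pTop J] φ) :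
    φ ∘ psiFp hf =
      psiFp (@Continuous.comp X (Set I) (Set J) tX (pTop I) (pTop J) f φ hφ hf :
        Continuous[tX, pTop J] (φ ∘ f)) := by
  funext p
  ext j
  have hW : IsOpen[pTop I] (φ ⁻¹' {A : Set J | j ∈ A}) :=
    @IsOpen.preimage _ _ (pTop I) (pTop J) φ hφ _ (isOpen_Ui j)
  have hpre : IsOpen (f ⁻¹' (φ ⁻¹' {A : Set J | j ∈ A})) :=
    @IsOpen.preimage X (Set I) _ (pTop I) f hf _ hW
  have hk := key hf p hW hpre
  exact hk.symm.trans (mem_iff_of_eq p hpre rfl)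

theorem part2 {X : Type} [tX : TopologicalSpace X] :
    ∀ (M : Type*) [tM : TopologicalSpace M]
        (ψ' : ∀ (I : Type) (f : X → Set I), Continuous[tX, pTop I] f → M → Set I),
        (∀ (I : Type) (f : X → Set I) (hf : Continuous[tX, pTop I] f),
          Continuous[tM, pTop I] (ψ' I f hf)) →
        (∀ (I J : Type) (f : X → Set I) (hf : Continuous[tX, pTop I] f)
            (φ : Set I → Set J) (hφ : Continuous[pTop I, pTop J] φ),
          φ ∘ ψ' I f hf =
            ψ' J (φ ∘ f) (@Continuous.comp X (Set I) (Set J) tX (pTop I) (pTop J) f φ hφ hf)) →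
        ∃! α : M → Fp X, Continuous[tM, _] α ∧
          ∀ (I : Type) (f : X → Set I) (hf : Continuous[tX, pTop I] f),
            psiFp hf ∘ α = ψ' I f hf := by
  intro M tM ψ' hcont hnat
  classical
  have psi'_congr : ∀ (I : Type) (f g : X → Set I) (hf : Continuous[tX, pTop I] f)
      (hg : Continuous[tX, pTop I] g), f = g → ψ' I f hf = ψ' I g hg := by
    intro I f g hf hg h; subst h; rfl
  set η := etaMap X with hη
  have hηc : Continuous[tX, pTop (Opens X)] η := etaMap_continuous
  set P : M → Set (Opens X) := ψ' (Opens X) η hηc with hP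
  -- the fundamental constraint
  have constraint : ∀ (m : M) (W₁ W₂ : Set (Set (Opens X))),
      IsOpen[pTop (Opens X)] W₁ → IsOpen[pTop (Opens X)] W₂ →
      (∀ x : X, η x ∈ W₁ ↔ η x ∈ W₂) → (P m ∈ W₁ ↔ P m ∈ W₂) := by
    intro m W₁ W₂ hW₁ hW₂ hxw
    have h1 := hnat (Opens X) Unit η hηc _ (phiW_continuous hW₁)
    have h2 := hnat (Opens X) Unit η hηc _ (phiW_continuous hW₂)
    have heq : ((fun S => {_u : Unit | S ∈ W₁}) ∘ η) = ((fun S => {_u : Unit | S ∈ W₂}) ∘ η) := by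
      funext x; ext u
      simpa using hxw x
    have h3 : ψ' Unit _ (@Continuous.comp X (Set (Opens X)) (Set Unit) tX
          (pTop (Opens X)) (pTop Unit) η _ (phiW_continuous hW₁) hηc)
        = ψ' Unit _ (@Continuous.comp X (Set (Opens X)) (Set Unit) tX
          (pTop (Opens X)) (pTop Unit) η _ (phiW_continuous hW₂) hηc) :=
      psi'_congr _ _ _ _ _ heq
    have h4 : {_u : Unit | P m ∈ W₁} = {_u : Unit | P m ∈ W₂} := by
      have := congrFun (h1.trans (h3.trans h2.symm)) m
      exact this
    constructor
    · intro h; have : (() : Unit) ∈ {_u : Unit | P m ∈ W₁} := h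
      rw [h4] at this; exact this
    · intro h; have : (() : Unit) ∈ {_u : Unit | P m ∈ W₂} := h
      rw [← h4] at this; exact this
  -- filter properties
  have hTop : ∀ m, (⊤ : Opens X) ∈ P m := by
    intro m
    have := constraint m {S | (⊤ : Opens X) ∈ S} Set.univ (isOpen_Ui _)
      (@isOpen_univ _ (pTop (Opens X))) (by intro x; simp [hη, etaMap])
    exact this.mpr (Set.mem_univ _)
  have hBot : ∀ m, (⊥ : Opens X) ∉ P m := by
    intro m
    have := constraint m {S | (⊥ : Opens X) ∈ S} ∅ (isOpen_Ui _)
      (@isOpen_empty _ (pTop (Opens X)))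
      (by intro x; simp only [hη, etaMap, Set.mem_setOf_eq, Set.mem_empty_iff_false, iff_false]
          exact fun a => a)
    exact fun h => (this.mp h)
  have hMeet : ∀ m (A B : Opens X), (A ⊓ B ∈ P m ↔ A ∈ P m ∧ B ∈ P m) := by
    intro m A B
    have := constraint m {S | A ⊓ B ∈ S} ({S | A ∈ S} ∩ {S | B ∈ S}) (isOpen_Ui _)
      (@IsOpen.inter _ (pTop (Opens X)) _ _ (isOpen_Ui A) (isOpen_Ui B))
      (by intro x; simp [hη, etaMap, ← SetLike.mem_coe])
    exact this
  have hUp : ∀ m (A B : Opens X), A ≤ B → A ∈ P m → B ∈ P m := by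
    intro m A B hAB hA
    have := constraint m {S | A ∈ S} ({S | A ∈ S} ∩ {S | B ∈ S}) (isOpen_Ui _)
      (@IsOpen.inter _ (pTop (Opens X)) _ _ (isOpen_Ui A) (isOpen_Ui B))
      (by intro x; simp only [hη, etaMap, Set.mem_setOf_eq, Set.mem_inter_iff]
          exact ⟨fun hx => ⟨hx, hAB hx⟩, fun h => h.1⟩)
    exact (this.mp hA).2
  have hPrime : ∀ m (S : Set (Opens X)), sSup S ∈ P m → ∃ A ∈ S, A ∈ P m := by
    intro m S hsup
    have := constraint m {T | sSup S ∈ T} (⋃ A ∈ S, {T | A ∈ T}) (isOpen_Ui _)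
      (@isOpen_biUnion _ _ (pTop (Opens X)) _ _ (fun A _ => isOpen_Ui A))
      (by intro x
          simp only [hη, etaMap, Set.mem_setOf_eq, Set.mem_iUnion, exists_prop]
          rw [Opens.mem_sSup])
    have h := this.mp hsup
    simpa using h
  
  set α : M → Fp X := fun m => ⟨P m, hTop m, hBot m,
    (fun A hA B hB => (hMeet m A B).mpr ⟨hA, hB⟩),
    (fun A hA B hAB => hUp m A B hAB hA),
    hPrime m⟩ with hα
  have hαc : Continuous[tM, _] α := by
    apply continuous_generateFrom_iff.mpr
    rintro s ⟨A, rfl⟩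
    have hps : α ⁻¹' {p : Fp X | A ∈ p.1} = ψ' (Opens X) η hηc ⁻¹' {S | A ∈ S} := rfl
    rw [hps]
    exact @IsOpen.preimage M (Set (Opens X)) tM (pTop (Opens X)) _ (hcont _ _ _) _ (isOpen_Ui A)
  have hfac : ∀ (I : Type) (f : X → Set I) (hf : Continuous[tX, pTop I] f),
      psiFp hf ∘ α = ψ' I f hf := by
    intro I f hf
    set g : I → Opens X := fun i => ⟨f ⁻¹' {A : Set I | i ∈ A},
      @IsOpen.preimage X (Set I) _ (pTop I) f hf _ (isOpen_Ui i)⟩ with hg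
    set φf : Set (Opens X) → Set I := fun S => {i | g i ∈ S} with hφf
    have hφfc : Continuous[pTop (Opens X), pTop I] φf := by
      apply continuous_generateFrom_iff.mpr
      rintro s ⟨F, rfl⟩
      have hpre : φf ⁻¹' {A : Set I | ↑F ⊆ A} = {S : Set (Opens X) | ↑(F.image g) ⊆ S} := by
        ext S
        simp [hφf, Set.subset_def]
      rw [hpre]
      exact isOpen_UF (F.image g)
    have hcomp : φf ∘ η = f := by
      funext x
      ext i
      simp [hφf, hη, etaMap, hg, ← SetLike.mem_coe]
    have hc2 : Continuous[tX, pTop I] (φf ∘ η) :=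
      @Continuous.comp X (Set (Opens X)) (Set I) tX (pTop (Opens X)) (pTop I) η φf hφfc hηc
    have h5 : φf ∘ ψ' (Opens X) η hηc = ψ' I f hf :=
      (hnat (Opens X) I η hηc φf hφfc).trans (psi'_congr I (φf ∘ η) f hc2 hf hcomp)
    funext m
    rw [← h5]
    rfl
  refine ⟨α, ⟨hαc, hfac⟩, ?_⟩
  intro β hβ
  funext m
  apply Subtype.ext
  have hb := congrFun (hβ.2 (Opens X) η hηc) m
  have hpsi : psiFp hηc (β m) = (β m).1 := by
    ext A
    show (⟨η ⁻¹' {S | A ∈ S}, _⟩ : Opens X) ∈ (β m).1 ↔ A ∈ (β m).1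
    exact mem_iff_of_eq (β m) _ rfl
  show (β m).1 = P m
  rw [← hpsi]
  exact hb


/-- `Fp(O(X))`, with the projections `ψ_f` indexed by continuous maps
`f : X → P(I)` into powers of the Sierpiński space, is a limit cone for the diagram sending
`(P(I), f)` to `P(I)`: (1) the cone condition `φ ∘ ψ_f = ψ_{φ∘f}` holds, and (2) any
topological space `M` with a compatible family of continuous maps `ψ'_f : M → P(I)` factors
uniquely through `Fp(O(X))` via a continuous `α` with `ψ_f ∘ α = ψ'_f` for all `f`.
(In other words, the underlying functor of the codensity monad of the inclusion of the
powers of the Sierpiński space into `Top` sends `X` to its soberification `Fp(O(X))`.) -/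
theorem Fp_isLimitCone {X : Type} [tX : TopologicalSpace X] :
    (∀ (I J : Type) (f : X → Set I) (hf : Continuous[tX, pTop I] f)
        (φ : Set I → Set J) (hφ : Continuous[pTop I, pTop J] φ),
        φ ∘ psiFp hf =
          psiFp (@Continuous.comp X (Set I) (Set J) tX (pTop I) (pTop J) f φ hφ hf :
            Continuous[tX, pTop J] (φ ∘ f))) ∧
    (∀ (M : Type*) [tM : TopologicalSpace M]
        (ψ' : ∀ (I : Type) (f : X → Set I), Continuous[tX, pTop I] f → M → Set I),
        (∀ (I : Type) (f : X → Set I) (hf : Continuous[tX, pTop I] f),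
          Continuous[tM, pTop I] (ψ' I f hf)) →
        (∀ (I J : Type) (f : X → Set I) (hf : Continuous[tX, pTop I] f)
            (φ : Set I → Set J) (hφ : Continuous[pTop I, pTop J] φ),
          φ ∘ ψ' I f hf =
            ψ' J (φ ∘ f) (@Continuous.comp X (Set I) (Set J) tX (pTop I) (pTop J) f φ hφ hf)) →
        ∃! α : M → Fp X, Continuous[tM, _] α ∧
          ∀ (I : Type) (f : X → Set I) (hf : Continuous[tX, pTop I] f),
            psiFp hf ∘ α = ψ' I f hf) :=
  ⟨fun I J f hf φ hφ => part1 I J f hf φ hφ, part2⟩
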